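/- Let Λ be a ring and 𝒳 a contravariantly finite additive subcategory of Mod Λ closed under direct products. Suppose every bounded complex of Λ-modules admits an 𝒳-quasi-isomorphism from a bounded above complex with components in 𝒳. Then every bounded above complex A of Λ-modules admits an 𝒳-quasi-isomorphism X → A with X a bounded above complex with components in 𝒳, obtained as a homotopy inverse limit of resolutions of the truncations A^{≥ i}. -/

import Mathlib

/-!
STATEMENT 15: Let `Λ` be a ring and `𝒳` a contravariantly finite additive
subcategory of `Mod Λ` closed under direct products.  Suppose every bounded
complex of `Λ`-modules admits an `𝒳`-quasi-isomorphism from a bounded above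
complex with components in `𝒳`.  Then every bounded above complex `A` of
`Λ`-modules admits an `𝒳`-quasi-isomorphism `X → A` with `X` a bounded above
complex with components in `𝒳` (in the paper, obtained as a homotopy inverse
limit of resolutions of the truncations `A^{≥ i}`).
An `𝒳`-quasi-isomorphism is a chain map `f` such that `Hom_Λ(T, f)` is a
quasi-isomorphism of complexes of abelian groups for every `T ∈ 𝒳`.
-/

open CategoryTheory Limits

universe u

noncomputable section

variable (Λ : Type u) [Ring Λ]

/-- `f` is an `𝒳`-quasi-isomorphism: `Hom(T, f)` is a quasi-isomorphism for
every `T ∈ 𝒳`. -/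
def IsXQuasiIso (𝒳 : Set (ModuleCat.{u} Λ))
    {K L : CochainComplex (ModuleCat.{u} Λ) ℤ} (f : K ⟶ L) : Prop :=
  ∀ T ∈ 𝒳,
    QuasiIso (((preadditiveCoyoneda.obj (Opposite.op T)).mapHomologicalComplex
      (ComplexShape.up ℤ)).map f)

/-- Bounded above complexes. -/
def BoundedAbove (K : CochainComplex (ModuleCat.{u} Λ) ℤ) : Prop :=
  ∃ b : ℤ, ∀ n : ℤ, b < n → IsZero (K.X n)

/-- Bounded complexes. -/
def Bounded (K : CochainComplex (ModuleCat.{u} Λ) ℤ) : Prop :=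
  ∃ a b : ℤ, ∀ n : ℤ, (n < a ∨ b < n) → IsZero (K.X n)

namespace Stmt15Aux

/-! ### A concrete quasi-isomorphism criterion in `Ab` -/

section Ab

variable {S₁ S₂ : ShortComplex AddCommGrpCat.{u}} (ψ : S₁ ⟶ S₂)

/-- The induced map on kernels of `g`. -/
def kerMap : AddMonoidHom.ker S₁.g.hom →+ AddMonoidHom.ker S₂.g.hom :=
  AddMonoidHom.mk' (fun x => ⟨ψ.τ₂ x.1, by
    have h : S₂.g (ψ.τ₂ x.1) = ψ.τ₃ (S₁.g x.1) := by
      rw [← comp_apply, ← comp_apply, ψ.comm₂₃]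
    have hx : S₁.g x.1 = 0 := x.2
    show S₂.g (ψ.τ₂ x.1) = 0
    rw [h, hx, map_zero]⟩)
    (fun a b => by ext; simp)

lemma kerMap_cond : AddMonoidHom.range S₁.abToCycles ≤
    AddSubgroup.comap (kerMap ψ) (AddMonoidHom.range S₂.abToCycles) := by
  rintro x ⟨y, rfl⟩
  refine ⟨ψ.τ₁ y, ?_⟩
  ext
  show S₂.f (ψ.τ₁ y) = ψ.τ₂ (S₁.f y)
  rw [← comp_apply, ← comp_apply, ψ.comm₁₂]

/-- Left homology map data for the explicit `Ab` left homology data. -/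
def abLHMD : ShortComplex.LeftHomologyMapData ψ
    S₁.abLeftHomologyData S₂.abLeftHomologyData where
  φK := AddCommGrpCat.ofHom (kerMap ψ)
  φH := AddCommGrpCat.ofHom
    (QuotientAddGroup.map _ _ (kerMap ψ) (kerMap_cond ψ))
  commi := by ext x; rfl
  commf' := by
    ext (x : S₁.X₁)
    refine Subtype.ext ?_
    show ψ.τ₂ (S₁.f x) = S₂.f (ψ.τ₁ x)
    rw [← comp_apply, ← comp_apply, ψ.comm₁₂]
  commπ := by ext x; rfl

lemma abQuasiIso
    (hsurj : ∀ a : S₂.X₂, S₂.g a = 0 → ∃ x : S₁.X₂, S₁.g x = 0 ∧ ψ.τ₂ x = a)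
    (hinj : ∀ x : S₁.X₂, S₁.g x = 0 → ∀ a : S₂.X₁, ψ.τ₂ x = S₂.f a →
      ∃ y : S₁.X₁, S₁.f y = x) :
    ShortComplex.QuasiIso ψ := by
  rw [(abLHMD ψ).quasiIso_iff]
  rw [ConcreteCategory.isIso_iff_bijective]
  constructor
  · show Function.Injective ⇑(QuotientAddGroup.map _ _ (kerMap ψ) (kerMap_cond ψ))
    rw [injective_iff_map_eq_zero]
    intro z hz
    obtain ⟨x, rfl⟩ := QuotientAddGroup.mk'_surjective _ z
    have h1 : (QuotientAddGroup.map _ _ (kerMap ψ) (kerMap_cond ψ))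
        ((QuotientAddGroup.mk' _) x) = 0 := hz
    rw [QuotientAddGroup.mk'_apply, QuotientAddGroup.map_mk,
      QuotientAddGroup.eq_zero_iff] at h1
    obtain ⟨a, ha⟩ := h1
    have ha2 : S₂.f a = ψ.τ₂ x.1 := congrArg Subtype.val ha
    obtain ⟨y, hy⟩ := hinj x.1 x.2 a ha2.symm
    rw [QuotientAddGroup.mk'_apply, QuotientAddGroup.eq_zero_iff]
    exact ⟨y, Subtype.ext hy⟩
  · show Function.Surjective ⇑(QuotientAddGroup.map _ _ (kerMap ψ) (kerMap_cond ψ))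
    intro z
    obtain ⟨q, rfl⟩ := QuotientAddGroup.mk'_surjective _ z
    obtain ⟨x, hx, hfx⟩ := hsurj q.1 q.2
    refine ⟨(QuotientAddGroup.mk' _) ⟨x, hx⟩, ?_⟩
    show (QuotientAddGroup.map _ _ (kerMap ψ) (kerMap_cond ψ))
        ((QuotientAddGroup.mk' _) ⟨x, hx⟩) = (QuotientAddGroup.mk' _) q
    rw [QuotientAddGroup.mk'_apply, QuotientAddGroup.mk'_apply,
      QuotientAddGroup.map_mk]
    exact congrArg _ (Subtype.ext hfx)

lemma abQuasiIsoAt {K L : CochainComplex AddCommGrpCat.{u} ℤ} (φ : K ⟶ L) (j : ℤ)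
    (hsurj : ∀ a : L.X (j + 1), L.d (j + 1) (j + 1 + 1) a = 0 →
      ∃ x : K.X (j + 1), K.d (j + 1) (j + 1 + 1) x = 0 ∧ φ.f (j + 1) x = a)
    (hinj : ∀ x : K.X (j + 1), K.d (j + 1) (j + 1 + 1) x = 0 →
      ∀ a : L.X j, φ.f (j + 1) x = L.d j (j + 1) a →
      ∃ y : K.X j, K.d j (j + 1) y = x) :
    QuasiIsoAt φ (j + 1) := by
  rw [quasiIsoAt_iff' φ j (j + 1) (j + 1 + 1)
    ((ComplexShape.up ℤ).prev_eq' rfl) ((ComplexShape.up ℤ).next_eq' rfl)]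
  exact abQuasiIso _ hsurj hinj

end Ab

/-! ### The degreewise construction of the `𝒳`-resolution -/

/-- All the data needed for the construction. -/
structure Setup (Λ : Type u) [Ring Λ] : Type (u + 1) where
  𝒳 : Set (ModuleCat.{u} Λ)
  A : CochainComplex (ModuleCat.{u} Λ) ℤ
  appT : ModuleCat.{u} Λ → ModuleCat.{u} Λ
  appφ : ∀ N, appT N ⟶ N
  hz : ∀ Z : ModuleCat.{u} Λ, IsZero Z → Z ∈ 𝒳
  hmem : ∀ N, appT N ∈ 𝒳
  hlift : ∀ N, ∀ T' ∈ 𝒳, ∀ ψ : T' ⟶ N, ∃ h : T' ⟶ appT N, h ≫ appφ N = ψ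
  b : ℤ
  hb : ∀ n : ℤ, b < n → IsZero (A.X n)

variable {Λ : Type u} [Ring Λ] (S : Setup Λ)

/-- The stage of the construction at degree `n`:  `M` is the new component
`X^n`, `N` is the previous component `X^{n+1}`. -/
structure St (n : ℤ) : Type (u + 1) where
  N : ModuleCat.{u} Λ
  M : ModuleCat.{u} Λ
  d : M ⟶ N
  fM : M ⟶ S.A.X n
  fN : N ⟶ S.A.X (n + 1)
  cycN : ∀ T : ModuleCat.{u} Λ, (T ⟶ N) → Prop
  mem : M ∈ S.𝒳
  comm : d ≫ fN = fM ≫ S.A.d n (n + 1)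
  dd : cycN M d
  approx : ∀ T ∈ S.𝒳, ∀ (a : T ⟶ S.A.X n) (x : T ⟶ N), cycN T x →
    x ≫ fN = a ≫ S.A.d n (n + 1) → ∃ h : T ⟶ M, h ≫ d = x ∧ h ≫ fM = a

/-- The zero module. -/
abbrev Z0 : ModuleCat.{u} Λ := ModuleCat.of Λ PUnit

lemma isZero_Z0 : IsZero (Z0 (Λ := Λ)) :=
  ModuleCat.isZero_of_subsingleton _

/-- The base stage, in degrees above the bound. -/
def base (n : ℤ) (hn : IsZero (S.A.X n)) : St S n where
  N := Z0
  M := Z0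
  d := 0
  fM := 0
  fN := 0
  cycN := fun _ _ => True
  mem := S.hz _ isZero_Z0
  comm := isZero_Z0.eq_of_src _ _
  dd := trivial
  approx := fun T _ a x _ _ => ⟨0, isZero_Z0.eq_of_tgt _ _, hn.eq_of_tgt _ _⟩

/-- The module of pairs `(a, x)` with `f x = d a` and `d x = 0`. -/
def Wsub {n : ℤ} (s : St S (n + 1)) : Submodule Λ ((S.A.X n) × s.M) where
  carrier := {p | s.fM p.2 = (S.A.d n (n + 1)) p.1 ∧ s.d p.2 = 0}
  add_mem' := by
    rintro p q ⟨h1, h2⟩ ⟨h3, h4⟩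
    exact ⟨by simp [map_add, h1, h3], by simp [map_add, h2, h4]⟩
  zero_mem' := ⟨by simp, by simp⟩
  smul_mem' := by
    rintro c p ⟨h1, h2⟩
    exact ⟨by simp [map_smul, h1], by simp [map_smul, h2]⟩

/-- The inductive step of the construction. -/
def step {n : ℤ} (s : St S (n + 1)) : St S n where
  N := s.M
  M := S.appT (ModuleCat.of Λ (Wsub S s))
  d := S.appφ _ ≫ ModuleCat.ofHom
    ((LinearMap.snd Λ (S.A.X n) s.M) ∘ₗ (Wsub S s).subtype)
  fM := S.appφ _ ≫ ModuleCat.ofHom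
    ((LinearMap.fst Λ (S.A.X n) s.M) ∘ₗ (Wsub S s).subtype)
  fN := s.fM
  cycN := fun T x => x ≫ s.d = 0
  mem := S.hmem _
  comm := by
    ext t
    exact ((S.appφ (ModuleCat.of Λ (Wsub S s)) t).2).1
  dd := by
    ext t
    exact ((S.appφ (ModuleCat.of Λ (Wsub S s)) t).2).2
  approx := by
    intro T hT a x hcyc hcomm
    have hcyc' : x ≫ s.d = 0 := hcyc
    have hmem2 : ∀ t : T, ((a t, x t) : (S.A.X n) × s.M) ∈ Wsub S s := by
      intro t
      constructor
      · exact ConcreteCategory.congr_hom hcomm t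
      · exact ConcreteCategory.congr_hom hcyc' t
    let ψ : T ⟶ ModuleCat.of Λ (Wsub S s) := ModuleCat.ofHom
      (LinearMap.codRestrict (Wsub S s)
        (LinearMap.prod a.hom x.hom) hmem2)
    obtain ⟨h, hh⟩ := S.hlift (ModuleCat.of Λ (Wsub S s)) T hT ψ
    refine ⟨h, ?_, ?_⟩
    · ext t
      have e : (S.appφ (ModuleCat.of Λ (Wsub S s))) (h t) = ψ t :=
        ConcreteCategory.congr_hom hh t
      exact congrArg (fun (w : Wsub S s) => (w : (S.A.X n) × s.M).2) e
    · ext t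
      have e : (S.appφ (ModuleCat.of Λ (Wsub S s))) (h t) = ψ t :=
        ConcreteCategory.congr_hom hh t
      exact congrArg (fun (w : Wsub S s) => (w : (S.A.X n) × s.M).1) e

/-- The whole tower of stages. -/
def F : ∀ n : ℤ, St S n := fun n =>
  if h : S.b < n then base S n (S.hb n h)
  else step S (F (n + 1))
termination_by n => (S.b + 1 - n).toNat
decreasing_by
  simp_wf
  omega

lemma F_eq (n : ℤ) : F S n =
    if h : S.b < n then base S n (S.hb n h) else step S (F S (n + 1)) := by
  rw [F]

lemma F_top (n : ℤ) (h : S.b < n) : F S n = base S n (S.hb n h) := by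
  rw [F_eq S n]
  exact dif_pos h

lemma F_step (n : ℤ) (h : ¬ S.b < n) : F S n = step S (F S (n + 1)) := by
  rw [F_eq S n]
  exact dif_neg h

lemma isZero_F_M (n : ℤ) (h : S.b < n) : IsZero ((F S n).M) := by
  rw [F_top S n h]
  exact isZero_Z0

lemma F_N_eq (n : ℤ) : (F S n).N = (F S (n + 1)).M := by
  by_cases h : S.b < n
  · rw [F_top S n h, F_top S (n + 1) (by omega)]
    rfl
  · rw [F_step S n h]
    rfl

section StepLemmas

variable {n : ℤ} (s : St S (n + 1)) (t : St S n)

lemma step_dd (ht : t = step S s) (e : t.N = s.M) {Z : ModuleCat.{u} Λ}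
    (g : s.N ⟶ Z) : (t.d ≫ eqToHom e) ≫ (s.d ≫ g) = 0 := by
  subst ht
  show (step S s).d ≫ (s.d ≫ g) = 0
  erw [← Category.assoc]
  have h0 : (step S s).d ≫ s.d = 0 := (step S s).dd
  rw [h0, zero_comp]

lemma step_comm' (ht : t = step S s) (e : t.N = s.M) :
    (t.d ≫ eqToHom e) ≫ s.fM = t.fM ≫ S.A.d n (n + 1) := by
  subst ht
  show (step S s).d ≫ s.fM = (step S s).fM ≫ S.A.d n (n + 1)
  exact (step S s).comm

lemma step_surj (ht : t = step S s) (T : ModuleCat.{u} Λ) (hT : T ∈ S.𝒳)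
    (a : T ⟶ S.A.X n) (ha : a ≫ S.A.d n (n + 1) = 0) :
    ∃ x : T ⟶ t.M, x ≫ t.d = 0 ∧ x ≫ t.fM = a := by
  subst ht
  obtain ⟨h', h1, h2⟩ := (step S s).approx T hT a 0
    (show (0 : T ⟶ s.M) ≫ s.d = 0 from zero_comp)
    (show (0 : T ⟶ s.M) ≫ s.fM = a ≫ S.A.d n (n + 1) by rw [zero_comp, ha])
  exact ⟨h', h1, h2⟩

lemma step_inj (ht : t = step S s) (e : t.N = s.M) (T : ModuleCat.{u} Λ)
    (hT : T ∈ S.𝒳) (a : T ⟶ S.A.X n) (x : T ⟶ s.M) (hx : x ≫ s.d = 0)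
    (hfx : x ≫ s.fM = a ≫ S.A.d n (n + 1)) :
    ∃ h : T ⟶ t.M, h ≫ (t.d ≫ eqToHom e) = x := by
  subst ht
  obtain ⟨h', h1, _⟩ := (step S s).approx T hT a x hx hfx
  exact ⟨h', h1⟩

end StepLemmas

/-- The resolution complex. -/
def Xc : CochainComplex (ModuleCat.{u} Λ) ℤ where
  X n := (F S n).M
  d i j := if h : i + 1 = j then
    (F S i).d ≫ eqToHom (by subst h; exact F_N_eq S i) else 0
  shape i j hij := dif_neg hij
  d_comp_d' i j k hij hjk := by
    have hij' : i + 1 = j := hij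
    have hjk' : j + 1 = k := hjk
    subst hij' hjk'
    rw [dif_pos rfl, dif_pos rfl]
    by_cases h : S.b < i
    · have h0 : (F S i).d = 0 := (isZero_F_M S i h).eq_of_src _ _
      rw [h0, zero_comp, zero_comp]
    · exact step_dd S _ _ (F_step S i h) _ _

lemma Xc_d (n : ℤ) : (Xc S).d n (n + 1) = (F S n).d ≫ eqToHom (F_N_eq S n) :=
  dif_pos rfl

/-- The chain map from the resolution to `A`. -/
def ff : Xc S ⟶ S.A where
  f n := (F S n).fM
  comm' := by
    intro i j hij
    have hij' : i + 1 = j := hij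
    subst hij'
    show (F S i).fM ≫ S.A.d i (i + 1) = (Xc S).d i (i + 1) ≫ (F S (i + 1)).fM
    rw [Xc_d S i]
    by_cases h : S.b < i
    · have h1 : (F S i).fM = 0 := (isZero_F_M S i h).eq_of_src _ _
      have h2 : (F S i).d = 0 := (isZero_F_M S i h).eq_of_src _ _
      rw [h1, h2, zero_comp, zero_comp]; exact zero_comp.symm
    · exact (step_comm' S _ _ (F_step S i h) (F_N_eq S i)).symm

lemma surj' (n : ℤ) (T : ModuleCat.{u} Λ) (hT : T ∈ S.𝒳) (a : T ⟶ S.A.X n)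
    (ha : a ≫ S.A.d n (n + 1) = 0) :
    ∃ x : T ⟶ (F S n).M, x ≫ (Xc S).d n (n + 1) = 0 ∧ x ≫ (F S n).fM = a := by
  by_cases h : S.b < n
  · exact ⟨0, zero_comp, (S.hb n h).eq_of_tgt _ _⟩
  · obtain ⟨x, h1, h2⟩ := step_surj S (F S (n + 1)) (F S n) (F_step S n h) T hT a ha
    refine ⟨x, ?_, h2⟩
    rw [Xc_d S n]; erw [← Category.assoc, h1, zero_comp]

lemma inj' (j : ℤ) (T : ModuleCat.{u} Λ) (hT : T ∈ S.𝒳) (a : T ⟶ S.A.X j)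
    (x : T ⟶ (F S (j + 1)).M) (hx : x ≫ (Xc S).d (j + 1) (j + 1 + 1) = 0)
    (hfx : x ≫ (F S (j + 1)).fM = a ≫ S.A.d j (j + 1)) :
    ∃ y : T ⟶ (F S j).M, y ≫ (Xc S).d j (j + 1) = x := by
  have hx' : x ≫ (F S (j + 1)).d = 0 := by
    rw [Xc_d S (j + 1)] at hx; erw [← Category.assoc] at hx
    have h2 : (x ≫ (F S (j + 1)).d) ≫ eqToHom (F_N_eq S (j + 1)) =
        (0 : T ⟶ (F S (j + 1)).N) ≫ eqToHom (F_N_eq S (j + 1)) := by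
      rw [zero_comp]
      exact hx
    exact (cancel_mono (eqToHom (F_N_eq S (j + 1)))).1 h2
  by_cases h : S.b < j
  · have hx0 : x = 0 := (isZero_F_M S (j + 1) (by omega)).eq_of_tgt _ _
    exact ⟨0, by rw [hx0]; exact zero_comp⟩
  · obtain ⟨y, hy⟩ := step_inj S (F S (j + 1)) (F S j) (F_step S j h)
      (F_N_eq S j) T hT a x hx' hfx
    refine ⟨y, ?_⟩
    rw [Xc_d S j]
    exact hy

/-- The main construction: existence of the bounded above `𝒳`-resolution. -/
lemma main : ∃ (K : CochainComplex (ModuleCat.{u} Λ) ℤ) (f : K ⟶ S.A),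
    (∀ n, K.X n ∈ S.𝒳) ∧ (∃ b : ℤ, ∀ n : ℤ, b < n → IsZero (K.X n)) ∧
    ∀ T ∈ S.𝒳, QuasiIso (((preadditiveCoyoneda.obj (Opposite.op T)).mapHomologicalComplex
      (ComplexShape.up ℤ)).map f) := by
  refine ⟨Xc S, ff S, fun n => (F S n).mem, ⟨S.b, fun n h => isZero_F_M S n h⟩, ?_⟩
  intro T hT
  refine ⟨fun i => ?_⟩
  obtain ⟨j, rfl⟩ : ∃ j : ℤ, i = j + 1 := ⟨i - 1, by omega⟩
  apply abQuasiIsoAt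
  · intro a ha
    obtain ⟨x, hx, hfx⟩ := surj' S (j + 1) T hT a ha
    exact ⟨x, hx, hfx⟩
  · intro x hx a hfx
    obtain ⟨y, hy⟩ := inj' S j T hT a x hx hfx
    exact ⟨y, hy⟩

end Stmt15Aux

theorem stmt15 (𝒳 : Set (ModuleCat.{u} Λ))
    (hzero : ∀ Z : ModuleCat.{u} Λ, IsZero Z → Z ∈ 𝒳)
    (hsum : ∀ T T' : ModuleCat.{u} Λ, T ∈ 𝒳 → T' ∈ 𝒳 → (T ⊞ T') ∈ 𝒳)
    (hsummand : ∀ T T' : ModuleCat.{u} Λ, (T ⊞ T') ∈ 𝒳 → T ∈ 𝒳)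
    -- `𝒳` is closed under direct products
    (hprod : ∀ (ι : Type u) (T : ι → ModuleCat.{u} Λ), (∀ i, T i ∈ 𝒳) →
      (∏ᶜ T) ∈ 𝒳)
    -- `𝒳` is contravariantly finite
    (happrox : ∀ N : ModuleCat.{u} Λ, ∃ T ∈ 𝒳, ∃ φ : T ⟶ N,
      ∀ T' ∈ 𝒳, ∀ ψ : T' ⟶ N, ∃ h : T' ⟶ T, h ≫ φ = ψ)
    -- every bounded complex has a bounded above `𝒳`-resolution
    (hbddres : ∀ B : CochainComplex (ModuleCat.{u} Λ) ℤ, Bounded Λ B →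
      ∃ (K : CochainComplex (ModuleCat.{u} Λ) ℤ) (f : K ⟶ B),
        (∀ n, K.X n ∈ 𝒳) ∧ BoundedAbove Λ K ∧ IsXQuasiIso Λ 𝒳 f)
    (A : CochainComplex (ModuleCat.{u} Λ) ℤ) (hA : BoundedAbove Λ A) :
    ∃ (K : CochainComplex (ModuleCat.{u} Λ) ℤ) (f : K ⟶ A),
      (∀ n, K.X n ∈ 𝒳) ∧ BoundedAbove Λ K ∧ IsXQuasiIso Λ 𝒳 f := by
  obtain ⟨b, hb⟩ := hA
  choose appT hmem appφ hlift using happrox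
  obtain ⟨K, f, h1, h2, h3⟩ := Stmt15Aux.main
    { 𝒳 := 𝒳, A := A, appT := appT, appφ := appφ, hz := hzero,
      hmem := hmem, hlift := hlift, b := b, hb := hb }
  exact ⟨K, f, h1, h2, h3⟩

end
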